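/- Let m ∈ ℕ and let q ∈ ℝ[x] with deg q ≤ m be nonnegative on [0,1]. Then there exist polynomials σ₀, σ₁, σ₂, σ₃ ∈ ℝ[x], each a sum of squares of real polynomials, such that q(x) = σ₀(x) + σ₁(x)·x + σ₂(x)·(1−x) + σ₃(x)·x·(1−x), and the degrees can be chosen so that each of the four summands σ₀, σ₁·x, σ₂·(1−x), σ₃·x·(1−x) has degree at most m. -/

import Mathlib

open Polynomial

section SOS
variable {R : Type*} [CommRing R]

lemma isSumSq_mul_self (a : R) : IsSumSq (a * a) := by
  simpa using IsSumSq.sq_add a 0 IsSumSq.zero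

lemma isSumSq_sq (a : R) : IsSumSq (a ^ 2) := by
  rw [sq]; exact isSumSq_mul_self a

lemma isSumSq_mul_self_mul {b : R} (a : R) (hb : IsSumSq b) : IsSumSq (a * a * b) := by
  induction hb with
  | zero => simpa using IsSumSq.zero
  | @sq_add y T hT ih =>
    have h : a * a * (y * y + T) = (a * y) * (a * y) + a * a * T := by ring
    rw [h]; exact IsSumSq.sq_add _ ih

lemma IsSumSq.mul' {a b : R} (ha : IsSumSq a) (hb : IsSumSq b) : IsSumSq (a * b) := by
  induction ha with
  | zero => simpa using IsSumSq.zero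
  | @sq_add x S hS ih => rw [add_mul]; exact (isSumSq_mul_self_mul x hb).add ih

end SOS

lemma isSumSq_C {c : ℝ} (hc : 0 ≤ c) : IsSumSq (C c : ℝ[X]) := by
  have h : (C c : ℝ[X]) = C (Real.sqrt c) * C (Real.sqrt c) := by
    rw [← C_mul, Real.mul_self_sqrt hc]
  rw [h]; exact isSumSq_mul_self _

lemma isSumSq_one : IsSumSq (1 : ℝ[X]) := by
  simpa using isSumSq_mul_self (1 : ℝ[X])

/-- Degree-bounded representation in the quadratic module of `[0,1]`. -/
def Rep01 (n : ℕ) (q : ℝ[X]) : Prop :=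
  ∃ σ₀ σ₁ σ₂ σ₃ : ℝ[X],
    IsSumSq σ₀ ∧ IsSumSq σ₁ ∧ IsSumSq σ₂ ∧ IsSumSq σ₃ ∧
    q = σ₀ + σ₁ * X + σ₂ * (1 - X) + σ₃ * (X * (1 - X)) ∧
    σ₀.natDegree ≤ n ∧ (σ₁ * X).natDegree ≤ n ∧
    (σ₂ * (1 - X)).natDegree ≤ n ∧ (σ₃ * (X * (1 - X))).natDegree ≤ n

lemma nd_add {a b : ℝ[X]} {n : ℕ} (ha : a.natDegree ≤ n) (hb : b.natDegree ≤ n) :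
    (a + b).natDegree ≤ n := le_trans (natDegree_add_le a b) (max_le ha hb)

lemma nd_mul {a b : ℝ[X]} {n1 n2 : ℕ} (ha : a.natDegree ≤ n1) (hb : b.natDegree ≤ n2) :
    (a * b).natDegree ≤ n1 + n2 := le_trans natDegree_mul_le (add_le_add ha hb)

lemma Rep01.mono {n n' : ℕ} {q : ℝ[X]} (h : n ≤ n') (hr : Rep01 n q) : Rep01 n' q := by
  obtain ⟨a, b, c, d, s0, s1, s2, s3, he, d0, d1, d2, d3⟩ := hr
  exact ⟨a, b, c, d, s0, s1, s2, s3, he, d0.trans h, d1.trans h, d2.trans h, d3.trans h⟩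

lemma Rep01.mul {n1 n2 : ℕ} {p q : ℝ[X]} (hp : Rep01 n1 p) (hq : Rep01 n2 q) :
    Rep01 (n1 + n2) (p * q) := by
  obtain ⟨a0, a1, a2, a3, sa0, sa1, sa2, sa3, hea, da0, da1, da2, da3⟩ := hp
  obtain ⟨b0, b1, b2, b3, sb0, sb1, sb2, sb3, heb, db0, db1, db2, db3⟩ := hq
  refine ⟨a0*b0 + a1*b1*X^2 + a2*b2*(1-X)^2 + a3*b3*(X*(1-X))^2,
          a0*b1 + a1*b0 + a2*b3*(1-X)^2 + a3*b2*(1-X)^2,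
          a0*b2 + a2*b0 + a1*b3*X^2 + a3*b1*X^2,
          a0*b3 + a3*b0 + a1*b2 + a2*b1, ?_, ?_, ?_, ?_, ?_, ?_, ?_, ?_, ?_⟩
  · exact ((((sa0.mul' sb0).add ((sa1.mul' sb1).mul' (isSumSq_sq X))).add
      ((sa2.mul' sb2).mul' (isSumSq_sq _))).add ((sa3.mul' sb3).mul' (isSumSq_sq _)))
  · exact ((((sa0.mul' sb1).add (sa1.mul' sb0)).add
      ((sa2.mul' sb3).mul' (isSumSq_sq _))).add ((sa3.mul' sb2).mul' (isSumSq_sq _)))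
  · exact ((((sa0.mul' sb2).add (sa2.mul' sb0)).add
      ((sa1.mul' sb3).mul' (isSumSq_sq _))).add ((sa3.mul' sb1).mul' (isSumSq_sq _)))
  · exact (((sa0.mul' sb3).add (sa3.mul' sb0)).add (sa1.mul' sb2)).add (sa2.mul' sb1)
  · rw [hea, heb]; ring
  · have h : (a0*b0 + a1*b1*X^2 + a2*b2*(1-X)^2 + a3*b3*(X*(1-X))^2 : ℝ[X])
        = a0*b0 + (a1*X)*(b1*X) + (a2*(1-X))*(b2*(1-X))
          + (a3*(X*(1-X)))*(b3*(X*(1-X))) := by ring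
    rw [h]
    exact nd_add (nd_add (nd_add (nd_mul da0 db0) (nd_mul da1 db1))
      (nd_mul da2 db2)) (nd_mul da3 db3)
  · have h : ((a0*b1 + a1*b0 + a2*b3*(1-X)^2 + a3*b2*(1-X)^2) * X : ℝ[X])
        = a0*(b1*X) + (a1*X)*b0 + (a2*(1-X))*(b3*(X*(1-X)))
          + (a3*(X*(1-X)))*(b2*(1-X)) := by ring
    rw [h]
    exact nd_add (nd_add (nd_add (nd_mul da0 db1) (nd_mul da1 db0))
      (nd_mul da2 db3)) (nd_mul da3 db2)
  · have h : ((a0*b2 + a2*b0 + a1*b3*X^2 + a3*b1*X^2) * (1 - X) : ℝ[X])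
        = a0*(b2*(1-X)) + (a2*(1-X))*b0 + (a1*X)*(b3*(X*(1-X)))
          + (a3*(X*(1-X)))*(b1*X) := by ring
    rw [h]
    exact nd_add (nd_add (nd_add (nd_mul da0 db2) (nd_mul da2 db0))
      (nd_mul da1 db3)) (nd_mul da3 db1)
  · have h : ((a0*b3 + a3*b0 + a1*b2 + a2*b1) * (X*(1-X)) : ℝ[X])
        = a0*(b3*(X*(1-X))) + (a3*(X*(1-X)))*b0 + (a1*X)*(b2*(1-X))
          + (a2*(1-X))*(b1*X) := by ring
    rw [h]
    exact nd_add (nd_add (nd_add (nd_mul da0 db3) (nd_mul da3 db0))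
      (nd_mul da1 db2)) (nd_mul da2 db1)

lemma Rep01.ofC {c : ℝ} (hc : 0 ≤ c) : Rep01 0 (C c) := by
  refine ⟨C c, 0, 0, 0, isSumSq_C hc, IsSumSq.zero, IsSumSq.zero, IsSumSq.zero, by ring,
    (natDegree_C _).le, ?_, ?_, ?_⟩ <;> simp

lemma Rep01.repX : Rep01 1 (X : ℝ[X]) := by
  refine ⟨0, 1, 0, 0, IsSumSq.zero, isSumSq_one, IsSumSq.zero, IsSumSq.zero, by ring,
    by simp, by simp, by simp, by simp⟩

lemma Rep01.oneSubX : Rep01 1 (1 - X : ℝ[X]) := by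
  refine ⟨0, 0, 1, 0, IsSumSq.zero, IsSumSq.zero, isSumSq_one, IsSumSq.zero, by ring,
    by simp, by simp, ?_, by simp⟩
  · simpa using (natDegree_sub_le (1 : ℝ[X]) X).trans (by simp)

lemma Rep01.linNeg {r : ℝ} (hr : r ≤ 0) : Rep01 1 (X - C r) := by
  refine ⟨C (-r), 1, 0, 0, isSumSq_C (by linarith), isSumSq_one, IsSumSq.zero, IsSumSq.zero,
    ?_, (natDegree_C _).le.trans zero_le_one, by simp, by simp, by simp⟩
  · rw [map_neg]; ring

lemma Rep01.linPos {r : ℝ} (hr : 1 ≤ r) : Rep01 1 (C r - X) := by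
  refine ⟨C (r - 1), 0, 1, 0, isSumSq_C (by linarith), IsSumSq.zero, isSumSq_one, IsSumSq.zero,
    ?_, (natDegree_C _).le.trans zero_le_one, by simp, ?_, by simp⟩
  · rw [map_sub, map_one]; ring
  · simpa using (natDegree_sub_le (1 : ℝ[X]) X).trans (by simp)

lemma nd_quad (a b : ℝ) : ((X - C a) ^ 2 + C b : ℝ[X]).natDegree ≤ 2 := by
  refine nd_add ?_ ((natDegree_C _).le.trans (by norm_num))
  exact natDegree_pow_le.trans (by simpa using Nat.mul_le_mul_left 2 (natDegree_X_sub_C_le a))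

lemma Rep01.quad {a b : ℝ} (hb : 0 ≤ b) : Rep01 2 ((X - C a) ^ 2 + C b) := by
  refine ⟨(X - C a) ^ 2 + C b, 0, 0, 0, (isSumSq_sq _).add (isSumSq_C hb),
    IsSumSq.zero, IsSumSq.zero, IsSumSq.zero, by ring, nd_quad a b, by simp, by simp, by simp⟩

lemma Rep01.sqLin (a : ℝ) : Rep01 2 ((X - C a) ^ 2 : ℝ[X]) := by
  have h := Rep01.quad (a := a) (le_refl (0:ℝ))
  simpa using h

lemma eval_nonneg_closure {q : ℝ[X]} {s : Set ℝ} {a : ℝ} (ha : a ∈ closure s)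
    (h : ∀ x ∈ s, 0 ≤ q.eval x) : 0 ≤ q.eval a := by
  have hne : (nhdsWithin a s).NeBot := mem_closure_iff_nhdsWithin_neBot.mp ha
  have ht : Filter.Tendsto (fun x => q.eval x) (nhdsWithin a s) (nhds (q.eval a)) :=
    (q.continuous.tendsto a).mono_left nhdsWithin_le_nhds
  exact ge_of_tendsto ht (eventually_mem_nhdsWithin.mono h)

lemma eval_nonpos_closure {q : ℝ[X]} {s : Set ℝ} {a : ℝ} (ha : a ∈ closure s)
    (h : ∀ x ∈ s, q.eval x ≤ 0) : q.eval a ≤ 0 := by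
  have h' : ∀ x ∈ s, 0 ≤ (-q).eval x := by intro x hx; simpa using h x hx
  have := eval_nonneg_closure (q := -q) ha h'
  simpa using this

lemma closure_Ioc' {a b : ℝ} (hab : a < b) : a ∈ closure (Set.Ioc a b) := by
  rw [closure_Ioc hab.ne]; exact Set.left_mem_Icc.mpr hab.le

lemma closure_Ico' {a b : ℝ} (hab : a < b) : b ∈ closure (Set.Ico a b) := by
  rw [closure_Ico hab.ne]; exact Set.right_mem_Icc.mpr hab.le

lemma main_rep : ∀ n : ℕ, ∀ q : ℝ[X], q.natDegree ≤ n →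
    (∀ x ∈ Set.Icc (0:ℝ) 1, 0 ≤ q.eval x) → Rep01 q.natDegree q := by
  intro n
  induction n with
  | zero =>
    intro q hdeg hq
    have h0 : q.natDegree = 0 := Nat.le_zero.mp hdeg
    have hqc : q = C (q.coeff 0) := eq_C_of_natDegree_le_zero hdeg
    have hc0 : 0 ≤ q.coeff 0 := by
      have h1 := hq 0 (by norm_num)
      rwa [hqc, eval_C] at h1
    rw [h0, hqc]
    exact Rep01.ofC hc0
  | succ n ih =>
    intro q hdeg hq
    by_cases hle : q.natDegree ≤ n
    · exact ih q hle hq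
    have hdq : q.natDegree = n + 1 := le_antisymm hdeg (not_le.mp hle)
    have hq0 : q ≠ 0 := fun h0 => by simp [h0] at hdq
    rw [hdq]
    have hmapne : (q.map (algebraMap ℝ ℂ)).degree ≠ 0 := by
      rw [degree_map_eq_of_injective (algebraMap ℝ ℂ).injective, degree_eq_natDegree hq0, hdq]
      exact (by exact_mod_cast Nat.succ_ne_zero n)
    obtain ⟨z, hz⟩ := IsAlgClosed.exists_root _ hmapne
    by_cases him : z.im = 0
    · -- real root r = z.re
      set r := z.re with hrdef
      have hroot : q.IsRoot r := by
        have h1 : eval z (q.map (algebraMap ℝ ℂ)) = 0 := hz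
        have hz' : z = (algebraMap ℝ ℂ) r := by
          apply Complex.ext <;> simp [him, hrdef]
        rw [eval_map, hz', eval₂_at_apply] at h1
        simpa using h1
      set q1 := q / (X - C r) with hq1def
      have hfac : (X - C r) * q1 = q := mul_div_eq_iff_isRoot.mpr hroot
      have hq1ne : q1 ≠ 0 := by
        rintro h1
        rw [h1, mul_zero] at hfac
        exact hq0 hfac.symm
      have hdeg1 : q.natDegree = 1 + q1.natDegree := by
        rw [← hfac, natDegree_mul (X_sub_C_ne_zero r) hq1ne, natDegree_X_sub_C]
      have hle1 : q1.natDegree ≤ n := by omega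
      have hev : ∀ x : ℝ, q.eval x = (x - r) * q1.eval x := by
        intro x; rw [← hfac]; simp
      rcases lt_trichotomy r 0 with hr0 | hr0 | hr0
      · -- r < 0
        have hq1pos : ∀ x ∈ Set.Icc (0:ℝ) 1, 0 ≤ q1.eval x := by
          intro x hx
          have h1 := hq x hx
          rw [hev x] at h1
          exact (mul_nonneg_iff_of_pos_left (by linarith [hx.1])).mp h1
        have h2 := (Rep01.linNeg hr0.le).mul (ih q1 hle1 hq1pos)
        rw [hfac] at h2
        have he : 1 + q1.natDegree = n + 1 := by omega
        rwa [he] at h2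
      · -- r = 0
        have hIoc : ∀ x ∈ Set.Ioc (0:ℝ) 1, 0 ≤ q1.eval x := by
          intro x hx
          have h1 := hq x ⟨hx.1.le, hx.2⟩
          rw [hev x] at h1
          exact (mul_nonneg_iff_of_pos_left (by rw [← hr0] at hx ⊢; linarith [hx.1])).mp h1
        have hq1pos : ∀ x ∈ Set.Icc (0:ℝ) 1, 0 ≤ q1.eval x := by
          intro x hx
          rcases eq_or_lt_of_le hx.1 with heq | hlt
          · rw [← heq]
            exact eval_nonneg_closure (closure_Ioc' zero_lt_one) hIoc
          · exact hIoc x ⟨hlt, hx.2⟩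
        have hfac' : X * q1 = q := by
          rw [← hfac, hr0]; simp
        have h2 := Rep01.repX.mul (ih q1 hle1 hq1pos)
        rw [hfac'] at h2
        have he : 1 + q1.natDegree = n + 1 := by omega
        rwa [he] at h2
      · rcases lt_trichotomy r 1 with hr1 | hr1 | hr1
        · -- 0 < r < 1 : double root
          have hIoc : ∀ x ∈ Set.Ioc r 1, 0 ≤ q1.eval x := by
            intro x hx
            have h1 := hq x ⟨by linarith [hx.1], hx.2⟩
            rw [hev x] at h1
            exact (mul_nonneg_iff_of_pos_left (by linarith [hx.1])).mp h1
          have hIco : ∀ x ∈ Set.Ico (0:ℝ) r, q1.eval x ≤ 0 := by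
            intro x hx
            have h1 := hq x ⟨hx.1, by linarith [hx.2]⟩
            rw [hev x] at h1
            nlinarith [hx.2]
          have hroot1 : q1.IsRoot r := by
            have hge : 0 ≤ q1.eval r := eval_nonneg_closure (closure_Ioc' hr1) hIoc
            have hle' : q1.eval r ≤ 0 := eval_nonpos_closure (closure_Ico' hr0) hIco
            exact le_antisymm hle' hge
          set q2 := q1 / (X - C r) with hq2def
          have hfac2 : (X - C r) * q2 = q1 := mul_div_eq_iff_isRoot.mpr hroot1
          have hq2ne : q2 ≠ 0 := by
            rintro h1
            rw [h1, mul_zero] at hfac2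
            exact hq1ne hfac2.symm
          have hfacq : (X - C r) ^ 2 * q2 = q := by
            rw [sq, mul_assoc, hfac2, hfac]
          have hdeg2 : q.natDegree = 2 + q2.natDegree := by
            rw [← hfacq, natDegree_mul (pow_ne_zero 2 (X_sub_C_ne_zero r)) hq2ne,
              natDegree_pow, natDegree_X_sub_C]
          have hev2 : ∀ x : ℝ, q.eval x = (x - r) ^ 2 * q2.eval x := by
            intro x; rw [← hfacq]; simp
          have hIoc2 : ∀ x ∈ Set.Ioc r 1, 0 ≤ q2.eval x := by
            intro x hx
            have h1 := hq x ⟨by linarith [hx.1], hx.2⟩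
            rw [hev2 x] at h1
            have hsq : 0 < (x - r) ^ 2 := by
              have h3 : x - r ≠ 0 := by have := hx.1; intro h4; linarith [sub_eq_zero.mp h4]
              positivity
            exact (mul_nonneg_iff_of_pos_left hsq).mp h1
          have hq2pos : ∀ x ∈ Set.Icc (0:ℝ) 1, 0 ≤ q2.eval x := by
            intro x hx
            by_cases hxr : x = r
            · rw [hxr]
              exact eval_nonneg_closure (closure_Ioc' hr1) hIoc2
            · have h1 := hq x hx
              rw [hev2 x] at h1
              have hsq : 0 < (x - r) ^ 2 := by
                have h3 : x - r ≠ 0 := sub_ne_zero.mpr hxr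
                positivity
              exact (mul_nonneg_iff_of_pos_left hsq).mp h1
          have hle2 : q2.natDegree ≤ n := by omega
          have h2 := (Rep01.sqLin r).mul (ih q2 hle2 hq2pos)
          rw [hfacq] at h2
          have he : 2 + q2.natDegree = n + 1 := by omega
          rwa [he] at h2
        · -- r = 1
          have hIco : ∀ x ∈ Set.Ico (0:ℝ) 1, 0 ≤ (-q1).eval x := by
            intro x hx
            have h1 := hq x ⟨hx.1, hx.2.le⟩
            rw [hev x] at h1
            rw [eval_neg]
            nlinarith [hx.2, hr1]
          have hq1pos : ∀ x ∈ Set.Icc (0:ℝ) 1, 0 ≤ (-q1).eval x := by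
            intro x hx
            rcases eq_or_lt_of_le hx.2 with heq | hlt
            · rw [heq]
              exact eval_nonneg_closure (closure_Ico' zero_lt_one) hIco
            · exact hIco x ⟨hx.1, hlt⟩
          have hfac' : (1 - X) * (-q1) = q := by
            rw [← hfac, hr1]; rw [map_one]; ring
          have hnd : (-q1).natDegree = q1.natDegree := natDegree_neg q1
          have h2 := Rep01.oneSubX.mul (ih (-q1) (by rw [hnd]; exact hle1) hq1pos)
          rw [hfac'] at h2
          have he : 1 + (-q1).natDegree = n + 1 := by rw [hnd]; omega
          rwa [he] at h2
        · -- r > 1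
          have hq1pos : ∀ x ∈ Set.Icc (0:ℝ) 1, 0 ≤ (-q1).eval x := by
            intro x hx
            have h1 := hq x hx
            rw [hev x] at h1
            rw [eval_neg]
            nlinarith [hx.2, hr1]
          have hfac' : (C r - X) * (-q1) = q := by
            rw [← hfac]; ring
          have hnd : (-q1).natDegree = q1.natDegree := natDegree_neg q1
          have h2 := (Rep01.linPos hr1.le).mul (ih (-q1) (by rw [hnd]; exact hle1) hq1pos)
          rw [hfac'] at h2
          have he : 1 + (-q1).natDegree = n + 1 := by rw [hnd]; omega
          rwa [he] at h2
    · -- complex root, quadratic factor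
      set d : ℝ[X] := (X - C z.re) ^ 2 + C (z.im ^ 2) with hddef
      have h2deg : ((X - C z.re : ℝ[X]) ^ 2).degree = 2 := by
        rw [degree_pow, degree_X_sub_C]; rfl
      have hClt : (C (z.im ^ 2) : ℝ[X]).degree < ((X - C z.re : ℝ[X]) ^ 2).degree := by
        rw [h2deg]
        exact lt_of_le_of_lt degree_C_le (by norm_num)
      have hdm : d.Monic := ((monic_X_sub_C z.re).pow 2).add_of_left hClt
      have hddeg : d.degree = 2 := by
        rw [hddef, degree_add_eq_left_of_degree_lt hClt, h2deg]
      have hd2 : d.natDegree = 2 := natDegree_eq_of_degree_eq_some hddeg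
      have hdz : eval z (d.map (algebraMap ℝ ℂ)) = 0 := by
        have hzre : (z : ℂ) - (z.re : ℂ) = (z.im : ℂ) * Complex.I := by
          apply Complex.ext <;> simp
        simp only [hddef, Polynomial.map_add, Polynomial.map_pow, Polynomial.map_sub,
          map_X, map_C, eval_add, eval_pow, eval_sub, eval_X, eval_C]
        rw [Complex.coe_algebraMap] at *
        rw [hzre]
        rw [mul_pow, Complex.I_sq]
        push_cast
        ring
      have hdvd : d ∣ q := by
        rw [← modByMonic_eq_zero_iff_dvd hdm]
        by_contra hne
        have hltdeg : (q %ₘ d).degree < 2 := by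
          have := degree_modByMonic_lt q hdm
          rwa [hddeg] at this
        have hnd1 : (q %ₘ d).natDegree ≤ 1 := by
          have h4 : (q %ₘ d).degree < ((2 : ℕ) : WithBot ℕ) := by exact_mod_cast hltdeg
          have h5 := (natDegree_lt_iff_degree_lt hne).mpr h4
          omega
        have hab : q %ₘ d = C ((q %ₘ d).coeff 1) * X + C ((q %ₘ d).coeff 0) :=
          eq_X_add_C_of_natDegree_le_one hnd1
        have hsum : q %ₘ d + d * (q /ₘ d) = q := modByMonic_add_div q d
        have hev0 : eval z ((q %ₘ d).map (algebraMap ℝ ℂ)) = 0 := by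
          have h1 : eval z (q.map (algebraMap ℝ ℂ)) = 0 := hz
          rw [← hsum] at h1
          rw [Polynomial.map_add, Polynomial.map_mul, eval_add, eval_mul, hdz] at h1
          simpa using h1
        rw [hab] at hev0
        simp only [Polynomial.map_add, Polynomial.map_mul, map_C, map_X, eval_add, eval_mul,
          eval_C, eval_X, Complex.coe_algebraMap] at hev0
        have him0 : ((q %ₘ d).coeff 1) * z.im = 0 := by
          have := congrArg Complex.im hev0
          simpa using this
        have ha0 : (q %ₘ d).coeff 1 = 0 := by
          rcases mul_eq_zero.mp him0 with h | h
          · exact h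
          · exact absurd h him
        have hb0 : (q %ₘ d).coeff 0 = 0 := by
          rw [ha0] at hev0
          have := congrArg Complex.re hev0
          simpa using this
        rw [ha0, hb0] at hab
        simp at hab
        exact hne hab
      obtain ⟨q2, hq2⟩ := hdvd
      have hq2ne : q2 ≠ 0 := by
        rintro rfl
        rw [mul_zero] at hq2
        exact hq0 hq2
      have hdpos : ∀ x : ℝ, 0 < d.eval x := by
        intro x
        simp only [hddef, eval_add, eval_pow, eval_sub, eval_X, eval_C]
        have : z.im ≠ 0 := him
        positivity
      have hq2pos : ∀ x ∈ Set.Icc (0:ℝ) 1, 0 ≤ q2.eval x := by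
        intro x hx
        have h1 := hq x hx
        rw [hq2, eval_mul] at h1
        exact (mul_nonneg_iff_of_pos_left (hdpos x)).mp h1
      have hdeg2 : q.natDegree = 2 + q2.natDegree := by
        rw [hq2, natDegree_mul hdm.ne_zero hq2ne, hd2]
      have hle2 : q2.natDegree ≤ n := by omega
      have h2 := (Rep01.quad (a := z.re) (sq_nonneg z.im)).mul (ih q2 hle2 hq2pos)
      rw [← hddef, ← hq2] at h2
      have he : 2 + q2.natDegree = n + 1 := by omega
      rwa [he] at h2

/-- a polynomial of degree at most `m` that is nonnegative on `[0,1]` has a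
representation `q = σ₀ + σ₁·x + σ₂·(1-x) + σ₃·x·(1-x)` with sums of squares `σᵢ`, such
that each of the four summands has degree at most `m`. -/
theorem statement18 (m : ℕ) (q : Polynomial ℝ) (hdeg : q.natDegree ≤ m)
    (hq : ∀ x ∈ Set.Icc (0 : ℝ) 1, 0 ≤ q.eval x) :
    ∃ σ₀ σ₁ σ₂ σ₃ : Polynomial ℝ,
      IsSumSq σ₀ ∧ IsSumSq σ₁ ∧ IsSumSq σ₂ ∧ IsSumSq σ₃ ∧
      q = σ₀ + σ₁ * X + σ₂ * (1 - X) + σ₃ * (X * (1 - X)) ∧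
      σ₀.natDegree ≤ m ∧ (σ₁ * X).natDegree ≤ m ∧
      (σ₂ * (1 - X)).natDegree ≤ m ∧ (σ₃ * (X * (1 - X))).natDegree ≤ m := by
  have h := (main_rep m q hdeg hq).mono hdeg
  obtain ⟨a, b, c, e, s0, s1, s2, s3, heq, d0, d1, d2, d3⟩ := h
  exact ⟨a, b, c, e, s0, s1, s2, s3, heq, d0, d1, d2, d3⟩
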